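/- arXiv:2212.05825 — 3 statements merged into one kernel-verified Lean document; each statement's English description precedes it below -/
import Mathlib

section
/- Let θ ∈ Irr(N), let K be a group with N ⊴ K ≤ Stab_G(θ) and K/N finite, and let θ̂ be a strong extension of θ to K. Then for every x ∈ K there exists n ∈ N such that θ̂(xn) ≠ 0. Consequently, if ψ : K → ℂ^× is a function and μ, μ′ : K/N → ℂ^× are functions with θ̂·ψ·μ = θ̂·ψ·μ′ (as functions on K, where μ, μ′ are evaluated at cosets), then μ = μ′; in particular the function μ(gN) with ᵍθ̂ = θ̂·ψ_g|_K·μ(gN) is uniquely determined by gN, θ̂ and ψ_g|_K. -/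
namespace TwistPaper

variable {G : Type*} [Group G]

/-- `χ : G → ℂ` is the zero-extension of an irreducible (finite-dimensional complex)
character of the subgroup `H` of `G`. -/
def IsIrrChar (H : Subgroup G) (χ : G → ℂ) : Prop :=
  ∃ n : ℕ, 0 < n ∧ ∃ ρ : H →* (Matrix (Fin n) (Fin n) ℂ)ˣ,
    (∀ U : Submodule ℂ (Fin n → ℂ),
        (∀ h : H, ∀ v ∈ U, ((ρ h : Matrix (Fin n) (Fin n) ℂ).mulVec v) ∈ U) → U = ⊥ ∨ U = ⊤) ∧
    (∀ h : H, χ (h : G) = Matrix.trace ((ρ h : Matrix (Fin n) (Fin n) ℂ))) ∧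
    ∀ g : G, g ∉ H → χ g = 0

/-- `θ` is an irreducible constituent of the restriction of `lam` to `N`. -/
def LiesAbove (N : Subgroup G) (lam θ : G → ℂ) : Prop :=
  ∃ (k : ℕ) (c : Fin k → ℕ) (χs : Fin k → G → ℂ),
    (∀ i, IsIrrChar N (χs i)) ∧
    (∀ x ∈ N, lam x = ∑ i, (c i : ℂ) * χs i x) ∧
    ∃ i, 0 < c i ∧ ∀ x ∈ N, χs i x = θ x

/-- `G`-twist equivalence of (characters of) the subgroup `H`. -/
def TwistEq (H : Subgroup G) (f g : G → ℂ) : Prop :=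
  ∃ ψ : G →* ℂˣ, ∀ x ∈ H, f x = g x * (ψ x : ℂ)

/-- `lam` lies above some `G`-twist of `θ`; i.e. the twist class of `lam` is in
`Irr̃(H ∣ θ̃)`. -/
def TwistLiesAbove (N : Subgroup G) (lam θ : G → ℂ) : Prop :=
  ∃ ψ : G →* ℂˣ, LiesAbove N lam fun x => θ x * (ψ x : ℂ)

/-- `g` stabilises the character `θ` of `N`, i.e. `g ∈ K_θ̃ = Stab_G(θ)`. -/
def InK (N : Subgroup G) (θ : G → ℂ) (g : G) : Prop :=
  ∀ x ∈ N, θ (g⁻¹ * x * g) = θ x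

/-- `g` stabilises the `G`-twist class of the character `θ` of `N`,
i.e. `g ∈ L_θ̃ = Stab_G(θ̃)`. -/
def InL (N : Subgroup G) (θ : G → ℂ) (g : G) : Prop :=
  ∃ ψ : G →* ℂˣ, ∀ x ∈ N, θ (g⁻¹ * x * g) = θ x * (ψ x : ℂ)

/-- The conjugate character `ᵍθ`. -/
def conjChar (g : G) (θ : G → ℂ) : G → ℂ := fun x => θ (g⁻¹ * x * g)

/-- The induced character from `H` to `H'` (for `H ≤ H'` of finite index), of the
zero-extension `χ` of a character of `H`:  `Ind χ (x) = Σ_{cosets gH} χ°(g⁻¹xg)`. -/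
noncomputable def indChar (H H' : Subgroup G) (χ : G → ℂ) : G → ℂ := fun x =>
  ∑ᶠ c : H' ⧸ H.subgroupOf H',
    χ (((Quotient.out c : H') : G)⁻¹ * x * ((Quotient.out c : H') : G))

/-- `Θ : G → Matrix` restricts on `N` to an irreducible representation of `N`. -/
def IsIrrRep (N : Subgroup G) {n : ℕ} (Θ : G → Matrix (Fin n) (Fin n) ℂ) : Prop :=
  (∀ x ∈ N, ∀ y ∈ N, Θ (x * y) = Θ x * Θ y) ∧ Θ 1 = 1 ∧ (∀ x ∈ N, IsUnit (Θ x)) ∧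
  ∀ U : Submodule ℂ (Fin n → ℂ), (∀ x ∈ N, ∀ v ∈ U, (Θ x).mulVec v ∈ U) → U = ⊥ ∨ U = ⊤

/-- `Pi` is (on `K`) a strong extension of the representation `Θ` of `N`, with factor set
`αh`. -/
def IsStrongExtRep (N K : Subgroup G) {n : ℕ} (Θ Pi : G → Matrix (Fin n) (Fin n) ℂ)
    (αh : G → G → ℂˣ) : Prop :=
  (∀ x ∈ N, Pi x = Θ x) ∧ (∀ g ∈ K, IsUnit (Pi g)) ∧
  (∀ g ∈ K, ∀ x ∈ N, Pi (g * x) = Pi g * Θ x ∧ Pi (x * g) = Θ x * Pi g) ∧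
  (∀ g ∈ K, ∀ h ∈ K, Pi (g * h) = (αh g h : ℂ) • (Pi g * Pi h))

/-- `θhat` is (on `K`) the character of a strong extension, with factor set `αh`, of a
representation of `N` affording the irreducible character `θ`. -/
def IsStrongExt (N K : Subgroup G) (θ θhat : G → ℂ) (αh : G → G → ℂˣ) : Prop :=
  ∃ n : ℕ, 0 < n ∧ ∃ Θ Pi : G → Matrix (Fin n) (Fin n) ℂ,
    IsIrrRep N Θ ∧ (∀ x ∈ N, θ x = Matrix.trace (Θ x)) ∧ (∀ g : G, g ∉ N → θ g = 0) ∧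
    IsStrongExtRep N K Θ Pi αh ∧ ∀ g ∈ K, θhat g = Matrix.trace (Pi g)

/-- `θhat` is (on `K`) a strong extension of the irreducible character `θ` of `N`. -/
def IsStrongExtChar (N K : Subgroup G) (θ θhat : G → ℂ) : Prop :=
  ∃ αh : G → G → ℂˣ, IsStrongExt N K θ θhat αh

/-- `f` is constant on the cosets of `N` lying in `K`; so `f` represents a function
`K/N → ℂˣ`, i.e. an element of `F_K`. -/
def NConst (N K : Subgroup G) (f : G → ℂˣ) : Prop :=
  ∀ x ∈ K, ∀ n ∈ N, f (x * n) = f x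

/-- `ν` represents an element of `Lin(K/N)`: a homomorphism on `K` trivial on `N`. -/
def LinKN (N K : Subgroup G) (ν : G → ℂˣ) : Prop :=
  (∀ x ∈ K, ∀ y ∈ K, ν (x * y) = ν x * ν y) ∧ ∀ n ∈ N, ν n = 1

/-- `ν` represents an element of `Γ_{K,θ̃}`: an element of `Lin(K/N)` with
`θ̂·ε|_K = θ̂·ν` for some `ε ∈ Lin(G)`. -/
def inGamma (N K : Subgroup G) (θhat : G → ℂ) (ν : G → ℂˣ) : Prop :=
  LinKN N K ν ∧ ∃ ε : G →* ℂˣ, ∀ x ∈ K, θhat x * (ε x : ℂ) = θhat x * (ν x : ℂ)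

/-- The data of the twisting characters `ψ g ∈ Lin(G)` and functions
`μ g : K/N → ℂˣ` with `ᵍθ̂ = θ̂·ψ_g|_K·μ(gN)` for every `g ∈ L`. -/
def MuFamily (N K L : Subgroup G) (θ θhat : G → ℂ) (ψ : G → G →* ℂˣ)
    (μ : G → G → ℂˣ) : Prop :=
  ∀ g ∈ L,
    (∀ x ∈ N, θ (g⁻¹ * x * g) = θ x * (ψ g x : ℂ)) ∧
    NConst N K (μ g) ∧
    ∀ x ∈ K, θhat (g⁻¹ * x * g) = θhat x * (ψ g x : ℂ) * (μ g x : ℂ)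

/-- `Lp/N` is a Sylow `p`-subgroup of `L/N`. -/
def IsSylowOver (p : ℕ) (N Lp L : Subgroup G) : Prop :=
  N ≤ Lp ∧ Lp ≤ L ∧ (∃ a : ℕ, N.relIndex Lp = p ^ a) ∧ ¬ p ∣ Lp.relIndex L



section Aux

open LinearMap Module

private lemma trace_mulVecLin {n : ℕ} (M : Matrix (Fin n) (Fin n) ℂ) :
    LinearMap.trace ℂ (Fin n → ℂ) M.mulVecLin = M.trace := by
  rw [LinearMap.trace_eq_matrix_trace ℂ (Pi.basisFun ℂ (Fin n)),
    LinearMap.toMatrix_eq_toMatrix', ← Matrix.toLin'_apply', LinearMap.toMatrix'_toLin']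

private lemma trace_smulRight' {n : ℕ} (φ : Module.Dual ℂ (Fin n → ℂ)) (u : Fin n → ℂ) :
    LinearMap.trace ℂ (Fin n → ℂ) (φ.smulRight u) = φ u := by
  have h : φ.smulRight u = dualTensorHom ℂ (Fin n → ℂ) (Fin n → ℂ) (φ ⊗ₜ u) := by
    ext x; simp [dualTensorHom_apply]
  rw [h, LinearMap.trace_eq_contract_apply]
  simp

private lemma burnside_trace {n : ℕ} (hn : 0 < n)
    (A : Submodule ℂ (Module.End ℂ (Fin n → ℂ)))
    (h1 : (1 : Module.End ℂ (Fin n → ℂ)) ∈ A)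
    (hmul : ∀ a ∈ A, ∀ b ∈ A, a * b ∈ A)
    (hirr : ∀ U : Submodule ℂ (Fin n → ℂ), (∀ a ∈ A, ∀ v ∈ U, a v ∈ U) → U = ⊥ ∨ U = ⊤)
    (B : Module.End ℂ (Fin n → ℂ))
    (hB : ∀ a ∈ A, LinearMap.trace ℂ (Fin n → ℂ) (B * a) = 0) :
    B = 0 := by
  haveI : Nonempty (Fin n) := ⟨⟨0, hn⟩⟩
  haveI : Nontrivial (Fin n → ℂ) := by
    refine ⟨fun _ => 0, fun _ => 1, fun h => ?_⟩
    simpa using congrFun h ⟨0, hn⟩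
  -- step 1: transitivity
  have step1 : ∀ v : Fin n → ℂ, v ≠ 0 → ∀ w : Fin n → ℂ, ∃ a ∈ A, a v = w := by
    intro v hv w
    set U : Submodule ℂ (Fin n → ℂ) :=
      { carrier := {w | ∃ a ∈ A, a v = w}
        add_mem' := by
          rintro x y ⟨a, ha, rfl⟩ ⟨b, hb, rfl⟩
          exact ⟨a + b, A.add_mem ha hb, rfl⟩
        zero_mem' := ⟨0, A.zero_mem, rfl⟩
        smul_mem' := by
          rintro c x ⟨a, ha, rfl⟩
          exact ⟨c • a, A.smul_mem c ha, rfl⟩ } with hUdef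
    have hinv : ∀ a ∈ A, ∀ u ∈ U, a u ∈ U := by
      rintro a ha u ⟨b, hb, rfl⟩
      exact ⟨a * b, hmul a ha b hb, rfl⟩
    rcases hirr U hinv with h | h
    · exfalso
      have hvU : v ∈ U := ⟨1, h1, rfl⟩
      rw [h] at hvU
      exact hv (by simpa using hvU)
    · show w ∈ {w | ∃ a ∈ A, a v = w}
      have : w ∈ U := by rw [h]; trivial
      exact this
  have hone : (1 : Module.End ℂ (Fin n → ℂ)) ≠ 0 := by
    intro h
    obtain ⟨x, hx⟩ := exists_ne (0 : Fin n → ℂ)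
    exact hx (by simpa using DFunLike.congr_fun h x)
  -- minimal rank
  have hex : ∃ r : ℕ, ∃ T ∈ A, T ≠ 0 ∧
      Module.finrank ℂ (LinearMap.range T) = r := ⟨_, 1, h1, hone, rfl⟩
  classical
  let r := Nat.find hex
  obtain ⟨T, hTA, hT0, hTr⟩ : ∃ T ∈ A, T ≠ 0 ∧
      Module.finrank ℂ (LinearMap.range T) = r := Nat.find_spec hex
  have hmin : ∀ m < r, ¬ ∃ T ∈ A, T ≠ 0 ∧
      Module.finrank ℂ (LinearMap.range T) = m := fun m hm => Nat.find_min hex hm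
  have hr0 : r ≠ 0 := by
    intro h
    apply hT0
    have : LinearMap.range T = ⊥ := by
      rw [← Submodule.finrank_eq_zero (R := ℂ)]
      omega
    exact LinearMap.range_eq_bot.mp this
  obtain ⟨u1, hu1⟩ : ∃ u, T u ≠ 0 := by
    by_contra h
    push_neg at h
    exact hT0 (LinearMap.ext fun u => h u)
  have hr1 : r = 1 := by
    by_contra hne
    have hr2 : 2 ≤ r := by omega
    -- pick w2 in range T outside span of T u1
    obtain ⟨w2, hw2mem, hw2⟩ : ∃ w2 ∈ LinearMap.range T, w2 ∉ (ℂ ∙ T u1) := by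
      by_contra h
      push_neg at h
      have hle : LinearMap.range T ≤ ℂ ∙ T u1 := h
      have := Submodule.finrank_mono (R := ℂ) (M := Fin n → ℂ) hle
      rw [hTr, finrank_span_singleton hu1] at this
      omega
    obtain ⟨u2, rfl⟩ := hw2mem
    obtain ⟨s, hsA, hs⟩ := step1 (T u1) hu1 u2
    -- restrict T*s to range T and take an eigenvalue
    set W := LinearMap.range T with hW
    have hmapsto : ∀ x ∈ W, (T * s) x ∈ W := by
      rintro x ⟨y, rfl⟩
      exact ⟨s (T y), rfl⟩
    haveI : Nontrivial W := by
      refine ⟨⟨T u1, ⟨u1, rfl⟩⟩, 0, fun h => hu1 ?_⟩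
      simpa [Subtype.ext_iff] using h
    obtain ⟨c, hc⟩ := Module.End.exists_eigenvalue ((T * s).restrict hmapsto)
    obtain ⟨w0, hw0⟩ := hc.exists_hasEigenvector
    have hw0ne : (w0 : Fin n → ℂ) ≠ 0 := fun h => hw0.2 (Subtype.ext h)
    have hgw0 : (T * s) (w0 : Fin n → ℂ) - c • (w0 : Fin n → ℂ) = 0 := by
      have := hw0.apply_eq_smul
      have h2 := congrArg (Subtype.val) this
      simp only [LinearMap.restrict_apply] at h2
      rw [h2]
      simp
    set g : Module.End ℂ (Fin n → ℂ) := T * s - c • 1 with hg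
    set T' : Module.End ℂ (Fin n → ℂ) := T * s * T - c • T with hT'
    have hT'A : T' ∈ A :=
      A.sub_mem (hmul _ (hmul T hTA s hsA) T hTA) (A.smul_mem c hTA)
    have hT'eq : ∀ x, T' x = g (T x) := by
      intro x
      simp [hT', hg, LinearMap.sub_apply, Module.End.mul_apply, LinearMap.smul_apply]
    have hT'0 : T' ≠ 0 := by
      intro h
      have : T' u1 = 0 := by rw [h]; rfl
      rw [hT'eq] at this
      have : (T * s) (T u1) - c • (T u1) = 0 := by
        simpa [hg, LinearMap.sub_apply, Module.End.mul_apply] using this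
      have h2 : T u2 = c • T u1 := by
        have h3 : T (s (T u1)) = c • T u1 := by
          have := this
          rw [sub_eq_zero] at this
          simpa [Module.End.mul_apply] using this
        rw [← hs]; exact h3
      exact hw2 (h2 ▸ Submodule.mem_span_singleton.mpr ⟨c, rfl⟩)
    -- rank of T' is smaller
    have hker : g (w0 : Fin n → ℂ) = 0 := by
      simpa [hg, LinearMap.sub_apply, Module.End.mul_apply] using hgw0
    have hrange_le : LinearMap.range T' ≤ W.map g := by
      rintro _ ⟨x, rfl⟩
      rw [hT'eq]
      exact ⟨T x, ⟨x, rfl⟩, rfl⟩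
    have hmap_lt : Module.finrank ℂ (W.map g) < r := by
      have hrn := (g.domRestrict W).finrank_range_add_finrank_ker
      rw [LinearMap.range_domRestrict] at hrn
      have hkerpos : 0 < Module.finrank ℂ (LinearMap.ker (g.domRestrict W)) := by
        rcases Nat.eq_zero_or_pos (Module.finrank ℂ (LinearMap.ker (g.domRestrict W))) with h | h
        · exfalso
          rw [Submodule.finrank_eq_zero (R := ℂ)] at h
          have : w0 ∈ LinearMap.ker (g.domRestrict W) := by
            simp [LinearMap.mem_ker, LinearMap.domRestrict_apply, hker]
          rw [h] at this
          exact hw0.2 (by simpa using this)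
        · exact h
      have hWr : Module.finrank ℂ W = r := hTr
      omega
    have : Module.finrank ℂ (LinearMap.range T') < r :=
      lt_of_le_of_lt (Submodule.finrank_mono hrange_le) hmap_lt
    exact hmin _ this ⟨T', hT'A, hT'0, rfl⟩
  -- rank one structure
  set v := T u1 with hv
  have hrange : LinearMap.range T = ℂ ∙ v := by
    symm
    apply Submodule.eq_of_le_of_finrank_eq
    · rw [Submodule.span_singleton_le_iff_mem]; exact ⟨u1, rfl⟩
    · rw [finrank_span_singleton hu1, hTr, hr1]
  obtain ⟨φ, hφ⟩ : ∃ φ : Module.Dual ℂ (Fin n → ℂ), φ v ≠ 0 := by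
    by_contra h
    push_neg at h
    exact hu1 ((Module.forall_dual_apply_eq_zero_iff ℂ v).mp h)
  set f : Module.Dual ℂ (Fin n → ℂ) := (φ v)⁻¹ • (φ.comp T) with hf
  have hTeq : ∀ x, T x = f x • v := by
    intro x
    have hx : T x ∈ ℂ ∙ v := hrange ▸ LinearMap.mem_range_self T x
    obtain ⟨d, hd⟩ := Submodule.mem_span_singleton.mp hx
    have : f x = d := by
      simp only [hf, LinearMap.smul_apply, LinearMap.comp_apply, smul_eq_mul]
      rw [← hd]
      field_simp
      rw [map_smul, smul_eq_mul, mul_comm]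
    rw [this, ← hd]
  have hfu1 : f u1 = 1 := by
    have h2 : (f u1 - 1) • v = 0 := by
      rw [sub_smul, one_smul, ← hTeq u1, hv, sub_self]
    rcases smul_eq_zero.mp h2 with h | h
    · exact sub_eq_zero.mp h
    · exact absurd h hu1
  -- conclude
  refine LinearMap.ext fun w => ?_
  rw [LinearMap.zero_apply]
  by_contra hBw
  obtain ⟨b, hbA, hb⟩ := step1 (B w) hBw u1
  obtain ⟨a, haA, ha⟩ := step1 v (by simpa [hv] using hu1) w
  -- a * T * b ∈ A and B * (a * T * b) = smulRight (f ∘ b) (B w)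
  have hmem : a * (T * b) ∈ A := hmul a haA _ (hmul T hTA b hbA)
  have htr := hB _ hmem
  have hcomp : B * (a * (T * b)) = LinearMap.smulRight (f.comp b) (B w) := by
    refine LinearMap.ext fun x => ?_
    simp only [Module.End.mul_apply, LinearMap.smulRight_apply, LinearMap.comp_apply]
    rw [hTeq (b x)]
    rw [map_smul, ha, map_smul]
  rw [hcomp, trace_smulRight'] at htr
  simp only [LinearMap.comp_apply, hb, hfu1] at htr
  exact one_ne_zero htr


end Aux

/-- a strong extension `θ̂` of `θ ∈ Irr(N)` to `K` does not vanish on any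
coset of `N` in `K`; consequently the functions `μ : K/N → ℂˣ` with
`θ̂·ψ·μ = θ̂·ψ·μ′` are uniquely determined, so `μ(gN)` is determined by `gN`, `θ̂`
and `ψ_g|_K`. -/
theorem statement5 (N K : Subgroup G) [N.Normal] (hfin : N.relIndex K ≠ 0) (hNK : N ≤ K)
    (θ θhat : G → ℂ) (hKstab : ∀ k ∈ K, InK N θ k)
    (hse : IsStrongExtChar N K θ θhat) :
    (∀ x ∈ K, ∃ n ∈ N, θhat (x * n) ≠ 0) ∧
    (∀ (ψ : G → ℂˣ) (μ μ' : G → ℂˣ), NConst N K μ → NConst N K μ' →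
        (∀ x ∈ K, θhat x * (ψ x : ℂ) * (μ x : ℂ) = θhat x * (ψ x : ℂ) * (μ' x : ℂ)) →
        ∀ x ∈ K, μ x = μ' x) := by
  obtain ⟨αh, n, hn, Θ, Pi, ⟨hΘmul, hΘ1, hΘunit, hΘirr⟩, hθtr, hθ0,
    ⟨hPiN, hPiU, hPimix, hPifac⟩, hθhat⟩ := hse
  classical
  have part1 : ∀ x ∈ K, ∃ m ∈ N, θhat (x * m) ≠ 0 := by
    intro x hx
    by_contra hcon
    push_neg at hcon
    set S : Set (Module.End ℂ (Fin n → ℂ)) := (fun y : G => (Θ y).mulVecLin) '' (N : Set G)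
      with hS
    set A : Submodule ℂ (Module.End ℂ (Fin n → ℂ)) := Submodule.span ℂ S with hA
    have h1 : (1 : Module.End ℂ (Fin n → ℂ)) ∈ A := by
      apply Submodule.subset_span
      refine ⟨1, N.one_mem, ?_⟩
      show (Θ (1 : G)).mulVecLin = 1
      rw [hΘ1, Matrix.mulVecLin_one]
      rfl
    have hSmul : ∀ s ∈ S, ∀ t ∈ S, s * t ∈ S := by
      rintro _ ⟨y, hy, rfl⟩ _ ⟨z, hz, rfl⟩
      refine ⟨y * z, N.mul_mem hy hz, ?_⟩
      show (Θ (y * z)).mulVecLin = (Θ y).mulVecLin * (Θ z).mulVecLin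
      rw [hΘmul y hy z hz, Matrix.mulVecLin_mul]
      rfl
    have hmulA : ∀ a ∈ A, ∀ b ∈ A, a * b ∈ A := by
      intro a ha b hb
      refine Submodule.span_induction (p := fun a _ => a * b ∈ A) ?_ ?_ ?_ ?_ ha
      · intro s hs
        refine Submodule.span_induction (p := fun b _ => s * b ∈ A) ?_ ?_ ?_ ?_ hb
        · intro t ht
          exact Submodule.subset_span (hSmul s hs t ht)
        · show s * 0 ∈ A
          rw [mul_zero]; exact A.zero_mem
        · intro p q hp hq hp' hq'
          show s * (p + q) ∈ A
          rw [mul_add]; exact A.add_mem hp' hq'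
        · intro c p hp hp'
          show s * (c • p) ∈ A
          rw [mul_smul_comm]; exact A.smul_mem c hp'
      · show (0 : Module.End ℂ (Fin n → ℂ)) * b ∈ A
        rw [zero_mul]; exact A.zero_mem
      · intro p q hp hq hp' hq'
        show (p + q) * b ∈ A
        rw [add_mul]; exact A.add_mem hp' hq'
      · intro c p hp hp'
        show (c • p) * b ∈ A
        rw [smul_mul_assoc]; exact A.smul_mem c hp'
    have hirrA : ∀ U : Submodule ℂ (Fin n → ℂ),
        (∀ a ∈ A, ∀ v ∈ U, a v ∈ U) → U = ⊥ ∨ U = ⊤ := by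
      intro U hU
      apply hΘirr U
      intro y hy v hv
      have := hU _ (Submodule.subset_span ⟨y, hy, rfl⟩) v hv
      simpa [Matrix.mulVecLin_apply] using this
    have hBtr : ∀ a ∈ A, LinearMap.trace ℂ (Fin n → ℂ) ((Pi x).mulVecLin * a) = 0 := by
      intro a ha
      refine Submodule.span_induction
        (p := fun a _ => LinearMap.trace ℂ (Fin n → ℂ) ((Pi x).mulVecLin * a) = 0)
        ?_ ?_ ?_ ?_ ha
      · rintro _ ⟨y, hy, rfl⟩
        show LinearMap.trace ℂ (Fin n → ℂ) ((Pi x).mulVecLin * (Θ y).mulVecLin) = 0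
        have hmulm : (Pi x).mulVecLin * (Θ y).mulVecLin = (Pi x * Θ y).mulVecLin := by
          rw [Matrix.mulVecLin_mul]; rfl
        rw [hmulm, trace_mulVecLin, ← (hPimix x hx y hy).1,
          ← hθhat (x * y) (mul_mem hx (hNK hy))]
        exact hcon y hy
      · show LinearMap.trace ℂ (Fin n → ℂ) ((Pi x).mulVecLin * 0) = 0
        rw [mul_zero, map_zero]
      · intro p q hp hq hp' hq'
        show LinearMap.trace ℂ (Fin n → ℂ) ((Pi x).mulVecLin * (p + q)) = 0
        rw [mul_add, map_add, hp', hq', add_zero]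
      · intro c p hp hp'
        show LinearMap.trace ℂ (Fin n → ℂ) ((Pi x).mulVecLin * (c • p)) = 0
        rw [mul_smul_comm, map_smul, hp', smul_zero]
    have hB0 := burnside_trace hn A h1 hmulA hirrA _ hBtr
    have hPix : Pi x = 0 := by
      calc Pi x = LinearMap.toMatrix' (Matrix.toLin' (Pi x)) :=
            (LinearMap.toMatrix'_toLin' _).symm
        _ = LinearMap.toMatrix' 0 := by rw [Matrix.toLin'_apply', hB0]
        _ = 0 := map_zero _
    have hu := hPiU x hx
    rw [hPix] at hu
    haveI : Nonempty (Fin n) := ⟨⟨0, hn⟩⟩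
    exact hu.ne_zero rfl
  refine ⟨part1, ?_⟩
  intro ψ μ μ' hμ hμ' heq x hx
  obtain ⟨m, hmN, hne⟩ := part1 x hx
  have hxm : x * m ∈ K := mul_mem hx (hNK hmN)
  have h := heq (x * m) hxm
  have h2 : (μ (x * m) : ℂ) = μ' (x * m) := by
    have hnz : θhat (x * m) * (ψ (x * m) : ℂ) ≠ 0 := mul_ne_zero hne (Units.ne_zero _)
    exact mul_left_cancel₀ hnz h
  have h3 : μ (x * m) = μ' (x * m) := Units.ext h2
  rw [hμ x hx m hmN, hμ' x hx m hmN] at h3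
  exact h3


end TwistPaper
end

section
/- The group Γ_{K,θ̃} is independent of the choice of representative of the twist class θ̃ and of the choice of strong extension: if ψ ∈ Lin(G), θ̂ is a strong extension of θ to K, and θ̂′ is any strong extension of θ·ψ|_N to K, then {ν ∈ Lin(K/N) : θ̂′·ε|_K = θ̂′·ν for some ε ∈ Lin(G)} = {ν ∈ Lin(K/N) : θ̂·ε|_K = θ̂·ν for some ε ∈ Lin(G)}. -/
namespace TwistPaper

variable {G : Type*} [Group G]

open Matrix in
lemma aux_schur (N : Subgroup G) {n : ℕ} (hn : 0 < n) (Θ : G → Matrix (Fin n) (Fin n) ℂ)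
    (hirr : ∀ U : Submodule ℂ (Fin n → ℂ),
      (∀ x ∈ N, ∀ v ∈ U, (Θ x).mulVec v ∈ U) → U = ⊥ ∨ U = ⊤)
    (M : Matrix (Fin n) (Fin n) ℂ) (hcomm : ∀ x ∈ N, M * Θ x = Θ x * M) :
    ∃ c : ℂ, M = c • (1 : Matrix (Fin n) (Fin n) ℂ) := by
  haveI : Nonempty (Fin n) := ⟨⟨0, hn⟩⟩
  obtain ⟨μ, hμ⟩ := Module.End.exists_eigenvalue (Matrix.toLin' M)
  refine ⟨μ, ?_⟩
  have hE : Module.End.eigenspace (Matrix.toLin' M) μ = ⊤ := by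
    have hinv : ∀ x ∈ N, ∀ v ∈ Module.End.eigenspace (Matrix.toLin' M) μ,
        (Θ x).mulVec v ∈ Module.End.eigenspace (Matrix.toLin' M) μ := by
      intro x hx v hv
      rw [Module.End.mem_eigenspace_iff] at hv ⊢
      rw [Matrix.toLin'_apply] at hv ⊢
      rw [Matrix.mulVec_mulVec, hcomm x hx, ← Matrix.mulVec_mulVec, hv, Matrix.mulVec_smul]
    rcases hirr _ hinv with h | h
    · exact absurd h hμ
    · exact h
  have hv : ∀ v, M.mulVec v = μ • v := by
    intro v
    have : v ∈ Module.End.eigenspace (Matrix.toLin' M) μ := hE ▸ Submodule.mem_top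
    rw [Module.End.mem_eigenspace_iff, Matrix.toLin'_apply] at this
    exact this
  ext i j
  have := congrFun (hv (Pi.single j 1)) i
  rw [Matrix.mulVec_single_one] at this
  simp only [Matrix.col_apply] at this
  rw [this]
  simp [Matrix.one_apply, Pi.single_apply, mul_comm]

open Matrix in
lemma aux_burnside (N : Subgroup G) {n : ℕ} (hn : 0 < n) (Θ : G → Matrix (Fin n) (Fin n) ℂ)
    (hmul : ∀ x ∈ N, ∀ y ∈ N, Θ (x * y) = Θ x * Θ y) (h1 : Θ 1 = 1)
    (hirr : ∀ U : Submodule ℂ (Fin n → ℂ),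
      (∀ x ∈ N, ∀ v ∈ U, (Θ x).mulVec v ∈ U) → U = ⊥ ∨ U = ⊤) :
    Submodule.span ℂ (Set.range fun x : N => Θ (x : G)) = ⊤ := by
  classical
  haveI : Nonempty (Fin n) := ⟨⟨0, hn⟩⟩
  let T : N → Module.End ℂ (Fin n → ℂ) := fun x => Matrix.toLin' (Θ (x : G))
  have hTapp : ∀ (x : N) (v : (Fin n → ℂ)), T x v = (Θ (x : G)).mulVec v := fun x v =>
    Matrix.toLin'_apply _ _
  have hTmul : ∀ x y : N, T x * T y = T (x * y) := by
    intro x y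
    show _ = Matrix.toLin' (Θ ((x : G) * (y : G)))
    rw [hmul _ x.2 _ y.2, Matrix.toLin'_mul, Module.End.mul_eq_comp]
  have hT1 : T 1 = 1 := by
    show Matrix.toLin' (Θ (1 : G)) = 1
    rw [h1, Matrix.toLin'_one]; rfl
  -- the span of the image of the representation, inside End
  set A : Submodule ℂ (Module.End ℂ (Fin n → ℂ)) := Submodule.span ℂ (Set.range T) with hA
  have hAclosed : ∀ (x : N) (a : Module.End ℂ (Fin n → ℂ)), a ∈ A → T x * a ∈ A := by
    intro x a ha
    have hle : Submodule.map (LinearMap.mulLeft ℂ (T x)) A ≤ A := by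
      rw [hA, Submodule.map_span, Submodule.span_le]
      rintro - ⟨-, ⟨y, rfl⟩, rfl⟩
      rw [LinearMap.mulLeft_apply, hTmul]
      exact Submodule.subset_span ⟨x * y, rfl⟩
    exact hle ⟨a, ha, rfl⟩
  -- the invariance predicate on submodules of (Fin n → ℂ)^n
  let Inv : Submodule ℂ (Fin n → (Fin n → ℂ)) → Prop := fun U =>
    ∀ (x : N), ∀ w ∈ U, (fun i => T x (w i)) ∈ U
  -- simple facts about Inv
  have hInvBot : Inv ⊥ := by
    intro x w hw
    rw [Submodule.mem_bot] at hw ⊢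
    subst hw; funext i; simp
  have hInvSup : ∀ U C, Inv U → Inv C → Inv (U ⊔ C) := by
    intro U C hU hC x w hw
    obtain ⟨u, hu, c, hc, rfl⟩ := Submodule.mem_sup.mp hw
    have : (fun i => T x ((u + c) i)) = (fun i => T x (u i)) + fun i => T x (c i) := by
      funext i; simp
    rw [this]
    exact Submodule.add_mem _ (Submodule.mem_sup_left (hU x u hu))
      (Submodule.mem_sup_right (hC x c hc))
  have hInvInf : ∀ U C, Inv U → Inv C → Inv (U ⊓ C) := by
    intro U C hU hC x w hw
    exact ⟨hU x w hw.1, hC x w hw.2⟩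
  -- the coordinate copies of (Fin n → ℂ) are invariant and simple
  have hsingleT : ∀ (i : Fin n) (x : N) (v : (Fin n → ℂ)),
      (fun k => T x ((Pi.single i v : Fin n → (Fin n → ℂ)) k)) = Pi.single i (T x v) := by
    intro i x v
    funext k
    by_cases hk : k = i
    · subst hk; simp
    · simp [Pi.single_eq_of_ne hk]
  have hViInv : ∀ i : Fin n, Inv (LinearMap.range (LinearMap.single ℂ (fun _ : Fin n => (Fin n → ℂ)) i)) := by
    intro i x w hw
    obtain ⟨v, rfl⟩ := hw
    rw [LinearMap.single_apply, hsingleT]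
    exact ⟨T x v, by rw [LinearMap.single_apply]⟩
  have hsimple : ∀ (i : Fin n) (W' : Submodule ℂ (Fin n → (Fin n → ℂ))),
      W' ≤ LinearMap.range (LinearMap.single ℂ (fun _ : Fin n => (Fin n → ℂ)) i) → Inv W' →
      W' = ⊥ ∨ W' = LinearMap.range (LinearMap.single ℂ (fun _ : Fin n => (Fin n → ℂ)) i) := by
    intro i W' hle hInv
    set U₀ : Submodule ℂ (Fin n → ℂ) := Submodule.comap (LinearMap.single ℂ (fun _ : Fin n => (Fin n → ℂ)) i) W'
      with hU₀
    have hmemU₀ : ∀ v : (Fin n → ℂ), v ∈ U₀ ↔ Pi.single i v ∈ W' := by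
      intro v; rw [hU₀, Submodule.mem_comap, LinearMap.single_apply]
    have hU₀inv : ∀ x ∈ N, ∀ v ∈ U₀, (Θ x).mulVec v ∈ U₀ := by
      intro x hx v hv
      rw [hmemU₀] at hv ⊢
      have := hInv ⟨x, hx⟩ _ hv
      rw [hsingleT] at this
      rw [← hTapp ⟨x, hx⟩ v]
      exact this
    have hdecomp : ∀ w ∈ W', w = Pi.single i (w i) ∧ w i ∈ U₀ := by
      intro w hw
      obtain ⟨v, rfl⟩ := hle hw
      rw [LinearMap.single_apply] at hw ⊢
      refine ⟨by rw [Pi.single_eq_same], ?_⟩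
      rw [hmemU₀, Pi.single_eq_same]
      exact hw
    rcases hirr U₀ hU₀inv with h | h
    · left
      rw [eq_bot_iff]
      intro w hw
      obtain ⟨hrep, hmem⟩ := hdecomp w hw
      rw [h, Submodule.mem_bot] at hmem
      rw [Submodule.mem_bot, hrep, hmem]
      simp
    · right
      refine le_antisymm hle ?_
      rintro - ⟨v, rfl⟩
      rw [LinearMap.single_apply]
      rw [← hmemU₀, h]
      trivial
  -- existence of invariant complements
  have hcompl : ∀ U : Submodule ℂ (Fin n → (Fin n → ℂ)), Inv U →
      ∃ C, Inv C ∧ U ⊓ C = ⊥ ∧ U ⊔ C = ⊤ := by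
    intro U hU
    set S : Set ℕ := {k | ∃ C : Submodule ℂ (Fin n → (Fin n → ℂ)),
      Inv C ∧ U ⊓ C = ⊥ ∧ Module.finrank ℂ C = k} with hS
    have hS0 : (0 : ℕ) ∈ S := ⟨⊥, hInvBot, inf_bot_eq U, finrank_bot ℂ _⟩
    have hSbdd : BddAbove S := by
      refine ⟨Module.finrank ℂ (Fin n → (Fin n → ℂ)), ?_⟩
      rintro k ⟨C, -, -, rfl⟩
      exact Submodule.finrank_le C
    obtain ⟨C, hCinv, hCU, hCrank⟩ := Nat.sSup_mem ⟨0, hS0⟩ hSbdd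
    refine ⟨C, hCinv, hCU, ?_⟩
    by_contra hne
    -- find a coordinate copy not contained in U ⊔ C
    have hex : ∃ (i : Fin n) (v : (Fin n → ℂ)), Pi.single i v ∉ U ⊔ C := by
      by_contra hall
      push_neg at hall
      apply hne
      rw [eq_top_iff]
      intro w _
      have hw : w = ∑ i, Pi.single i (w i) := (Finset.univ_sum_single w).symm
      rw [hw]
      exact Submodule.sum_mem _ fun i _ => hall i (w i)
    obtain ⟨i, v, hv⟩ := hex
    have hVi := hViInv i
    have hW' := hInvInf _ _ hVi (hInvSup _ _ hU hCinv)
    rcases hsimple i _ inf_le_left hW' with h | h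
    · -- build a bigger complement
      set C' : Submodule ℂ (Fin n → (Fin n → ℂ)) :=
        C ⊔ LinearMap.range (LinearMap.single ℂ (fun _ : Fin n => (Fin n → ℂ)) i) with hC'
      have hC'inv : Inv C' := hInvSup _ _ hCinv hVi
      have hC'U : U ⊓ C' = ⊥ := by
        rw [eq_bot_iff]
        rintro w ⟨hwU, hwC'⟩
        obtain ⟨c, hc, s, hs, rfl⟩ := Submodule.mem_sup.mp hwC'
        have hsmem : s ∈ LinearMap.range (LinearMap.single ℂ (fun _ : Fin n => (Fin n → ℂ)) i) ⊓
            (U ⊔ C) := by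
          refine ⟨hs, ?_⟩
          have : s = (c + s) - c := by abel
          rw [this]
          exact Submodule.sub_mem _ (Submodule.mem_sup_left hwU) (Submodule.mem_sup_right hc)
        rw [h, Submodule.mem_bot] at hsmem
        subst hsmem
        rw [add_zero] at hwU ⊢
        have : c ∈ U ⊓ C := ⟨hwU, hc⟩
        rw [hCU] at this
        exact this
      have hlt : C < C' := by
        refine lt_of_le_of_ne le_sup_left ?_
        intro hEq
        apply hv
        have : Pi.single i v ∈ C' := by
          apply Submodule.mem_sup_right
          exact ⟨v, by rw [LinearMap.single_apply]⟩
        rw [← hEq] at this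
        exact Submodule.mem_sup_right this
      have : Module.finrank ℂ C' ∈ S := ⟨C', hC'inv, hC'U, rfl⟩
      have hle := le_csSup hSbdd this
      have := Submodule.finrank_lt_finrank_of_lt hlt
      omega
    · -- contradiction: the copy is inside U ⊔ C
      apply hv
      have : Pi.single i v ∈ LinearMap.range (LinearMap.single ℂ (fun _ : Fin n => (Fin n → ℂ)) i) :=
        ⟨v, by rw [LinearMap.single_apply]⟩
      rw [← h] at this
      exact this.2
  -- the orbit submodule
  let e : Fin n → (Fin n → ℂ) := fun i => Pi.single i 1
  let ev : Module.End ℂ (Fin n → ℂ) →ₗ[ℂ] (Fin n → (Fin n → ℂ)) :=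
    { toFun := fun f => fun i => f (e i)
      map_add' := by intro f g; funext i; simp
      map_smul' := by intro c f; funext i; simp }
  set Orb : Submodule ℂ (Fin n → (Fin n → ℂ)) := A.map ev with hOrb
  have hOrbInv : Inv Orb := by
    rintro x - ⟨a, ha, rfl⟩
    exact ⟨T x * a, hAclosed x a ha, rfl⟩
  have heOrb : e ∈ Orb := by
    refine ⟨1, ?_, ?_⟩
    · rw [← hT1]; exact Submodule.subset_span ⟨1, rfl⟩
    · funext i; simp [ev]
  obtain ⟨C, hCinv, hCU, hCsup⟩ := hcompl Orb hOrbInv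
  have hIsCompl : IsCompl Orb C :=
    ⟨disjoint_iff.mpr hCU, codisjoint_iff.mpr hCsup⟩
  set π : (Fin n → (Fin n → ℂ)) →ₗ[ℂ] (Fin n → (Fin n → ℂ)) :=
    Orb.subtype ∘ₗ Orb.projectionOnto C hIsCompl with hπdef
  have hπOrb : ∀ w ∈ Orb, π w = w := by
    intro w hw
    show Orb.subtype (Orb.projectionOnto C hIsCompl w) = w
    rw [show w = ((⟨w, hw⟩ : Orb) : Fin n → (Fin n → ℂ)) from rfl,
      Submodule.projectionOnto_apply_left hIsCompl]
    rfl
  have hπC : ∀ w ∈ C, π w = 0 := by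
    intro w hw
    show Orb.subtype (Orb.projectionOnto C hIsCompl w) = 0
    rw [show w = ((⟨w, hw⟩ : C) : Fin n → (Fin n → ℂ)) from rfl,
      Submodule.projectionOnto_apply_right hIsCompl]
    rfl
  have hπmem : ∀ w, π w ∈ Orb := fun w => (Orb.projectionOnto C hIsCompl w).2
  have hπcomm : ∀ (x : N) (w : Fin n → (Fin n → ℂ)),
      π (fun i => T x (w i)) = fun i => T x (π w i) := by
    intro x w
    have hwtop : w ∈ Orb ⊔ C := by rw [hCsup]; trivial
    obtain ⟨u, hu, c, hc, hw⟩ := Submodule.mem_sup.mp hwtop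
    have h1 : (fun i => T x (w i)) = (fun i => T x (u i)) + fun i => T x (c i) := by
      funext i; rw [← hw]; simp
    have hπw : π w = u := by rw [← hw, map_add, hπOrb u hu, hπC c hc, add_zero]
    rw [h1, map_add, hπOrb _ (hOrbInv x u hu), hπC _ (hCinv x c hc), add_zero, hπw]
  let q : Fin n → Fin n → Module.End ℂ (Fin n → ℂ) := fun i j =>
    (LinearMap.proj i) ∘ₗ π ∘ₗ (LinearMap.single ℂ (fun _ : Fin n => (Fin n → ℂ)) j)
  have hqapp : ∀ (i j : Fin n) (v : (Fin n → ℂ)), q i j v = π (Pi.single j v) i := by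
    intro i j v; simp [q, LinearMap.single_apply]
  have hqcomm : ∀ (i j : Fin n) (x : N) (v : (Fin n → ℂ)), q i j (T x v) = T x (q i j v) := by
    intro i j x v
    have hcf := congrFun (hπcomm x (Pi.single j v)) i
    rw [hsingleT j x v] at hcf
    rw [hqapp, hqapp, hcf]
  have hscal : ∀ i j : Fin n, ∃ c : ℂ, ∀ v, q i j v = c • v := by
    intro i j
    set M : Matrix (Fin n) (Fin n) ℂ := Matrix.toLin'.symm (q i j) with hM
    have hTM : Matrix.toLin' M = q i j := Matrix.toLin'.apply_symm_apply _
    have hcomm : ∀ x ∈ N, M * Θ x = Θ x * M := by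
      intro x hx
      apply Matrix.toLin'.injective
      rw [Matrix.toLin'_mul, Matrix.toLin'_mul, hTM]
      apply LinearMap.ext
      intro v
      simp only [LinearMap.comp_apply]
      exact hqcomm i j ⟨x, hx⟩ v
    obtain ⟨c, hc⟩ := aux_schur N hn Θ hirr M hcomm
    refine ⟨c, fun v => ?_⟩
    rw [← hTM, hc, Matrix.toLin'_apply, Matrix.smul_mulVec, Matrix.one_mulVec]
  choose cc hcc using hscal
  have hπsum : ∀ (w : Fin n → (Fin n → ℂ)) (i : Fin n), π w i = ∑ j, cc i j • w j := by
    intro w i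
    have hw : w = ∑ j, Pi.single j (w j) := (Finset.univ_sum_single w).symm
    conv_lhs => rw [hw]
    rw [map_sum, Finset.sum_apply]
    refine Finset.sum_congr rfl fun j _ => ?_
    rw [← hqapp, hcc]
  have hccval : ∀ i k : Fin n, cc i k = if k = i then 1 else 0 := by
    intro i k
    have h1 : π e = e := hπOrb e heOrb
    have h2 : (∑ j, cc i j • e j) = e i := by rw [← hπsum e i, h1]
    have h3 := congrFun h2 k
    rw [Finset.sum_apply] at h3
    simpa [e, Pi.smul_apply, Pi.single_apply, mul_ite, Finset.sum_ite_eq] using h3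
  have hπid : ∀ w, π w = w := by
    intro w; funext i
    rw [hπsum w i]
    simp [hccval, ite_smul]
  have hOrbTop : ∀ w, w ∈ Orb := fun w => by rw [← hπid w]; exact hπmem w
  have hAtop : A = ⊤ := by
    rw [eq_top_iff]
    intro f _
    obtain ⟨a, ha, hev⟩ := hOrbTop (ev f)
    have haf : a = f := by
      refine Module.Basis.ext (Pi.basisFun ℂ (Fin n)) fun i => ?_
      have := congrFun hev i
      rw [Pi.basisFun_apply]
      exact this
    rwa [← haf]
  have hmap : Submodule.map
      ((Matrix.toLin' : Matrix (Fin n) (Fin n) ℂ ≃ₗ[ℂ] (Module.End ℂ (Fin n → ℂ))) : Matrix (Fin n) (Fin n) ℂ →ₗ[ℂ] Module.End ℂ (Fin n → ℂ))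
      (Submodule.span ℂ (Set.range fun x : N => Θ (x : G))) = A := by
    rw [Submodule.map_span, hA]
    congr 1
    rw [← Set.range_comp]
    rfl
  apply Submodule.map_injective_of_injective
    (f := ((Matrix.toLin' : Matrix (Fin n) (Fin n) ℂ ≃ₗ[ℂ] (Module.End ℂ (Fin n → ℂ))) : Matrix (Fin n) (Fin n) ℂ →ₗ[ℂ] Module.End ℂ (Fin n → ℂ)))
    Matrix.toLin'.injective
  rw [hmap, hAtop, Submodule.map_top]
  exact (LinearEquiv.range _).symm

open Matrix in
/-- Given two irreducible representations of `N` with the same trace, and matrices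
intertwining each with the same conjugation automorphism, the traces of the two
intertwiners vanish simultaneously. -/
lemma aux_transfer (N : Subgroup G) {n m : ℕ} (hn : 0 < n) (hm : 0 < m)
    (Θ : G → Matrix (Fin n) (Fin n) ℂ) (Θ'' : G → Matrix (Fin m) (Fin m) ℂ)
    (hmulA : ∀ x ∈ N, ∀ y ∈ N, Θ (x * y) = Θ x * Θ y) (h1A : Θ 1 = 1)
    (hirrA : ∀ U : Submodule ℂ (Fin n → ℂ),
      (∀ x ∈ N, ∀ v ∈ U, (Θ x).mulVec v ∈ U) → U = ⊥ ∨ U = ⊤)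
    (hmulB : ∀ x ∈ N, ∀ y ∈ N, Θ'' (x * y) = Θ'' x * Θ'' y) (h1B : Θ'' 1 = 1)
    (hirrB : ∀ U : Submodule ℂ (Fin m → ℂ),
      (∀ x ∈ N, ∀ v ∈ U, (Θ'' x).mulVec v ∈ U) → U = ⊥ ∨ U = ⊤)
    (htr : ∀ x ∈ N, (Θ x).trace = (Θ'' x).trace)
    (g : G) (hg : ∀ x ∈ N, g * x * g⁻¹ ∈ N)
    (P : Matrix (Fin n) (Fin n) ℂ) (P' : Matrix (Fin m) (Fin m) ℂ)
    (hP : IsUnit P) (hP' : IsUnit P')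
    (hPc : ∀ x ∈ N, P * Θ x = Θ (g * x * g⁻¹) * P)
    (hP'c : ∀ x ∈ N, P' * Θ'' x = Θ'' (g * x * g⁻¹) * P') :
    (P.trace = 0 ↔ P'.trace = 0) := by
  classical
  have hspanA := aux_burnside N hn Θ hmulA h1A hirrA
  have hspanB := aux_burnside N hm Θ'' hmulB h1B hirrB
  -- the "matrix coefficient" maps
  let t : Matrix (Fin n) (Fin n) ℂ →ₗ[ℂ] (N → ℂ) :=
    { toFun := fun M => fun x => (M * Θ (x : G)).trace
      map_add' := by intro M M'; funext x; simp [add_mul]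
      map_smul' := by intro c M; funext x; simp [Matrix.smul_mul] }
  let t'' : Matrix (Fin m) (Fin m) ℂ →ₗ[ℂ] (N → ℂ) :=
    { toFun := fun M => fun x => (M * Θ'' (x : G)).trace
      map_add' := by intro M M'; funext x; simp [add_mul]
      map_smul' := by intro c M; funext x; simp [Matrix.smul_mul] }
  have htinj : Function.Injective t := by
    rw [injective_iff_map_eq_zero]
    intro M hM
    let τ : Matrix (Fin n) (Fin n) ℂ →ₗ[ℂ] ℂ :=
      { toFun := fun A => (M * A).trace
        map_add' := by intro A B; simp [mul_add]
        map_smul' := by intro c A; simp [Matrix.mul_smul] }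
    have hτ : ∀ A, τ A = 0 := by
      intro A
      have hmem : A ∈ Submodule.span ℂ (Set.range fun x : N => Θ (x : G)) := by
        rw [hspanA]; trivial
      have hker : Submodule.span ℂ (Set.range fun x : N => Θ (x : G)) ≤ LinearMap.ker τ := by
        rw [Submodule.span_le]
        rintro - ⟨x, rfl⟩
        exact congrFun hM x
      exact hker hmem
    ext i j
    have := hτ (Matrix.single j i 1)
    simpa [τ, Matrix.trace, Matrix.diag, Matrix.mul_apply, Matrix.single, ite_and]
      using this
  have ht''inj : Function.Injective t'' := by
    rw [injective_iff_map_eq_zero]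
    intro M hM
    let τ : Matrix (Fin m) (Fin m) ℂ →ₗ[ℂ] ℂ :=
      { toFun := fun A => (M * A).trace
        map_add' := by intro A B; simp [mul_add]
        map_smul' := by intro c A; simp [Matrix.mul_smul] }
    have hτ : ∀ A, τ A = 0 := by
      intro A
      have hmem : A ∈ Submodule.span ℂ (Set.range fun x : N => Θ'' (x : G)) := by
        rw [hspanB]; trivial
      have hker : Submodule.span ℂ (Set.range fun x : N => Θ'' (x : G)) ≤ LinearMap.ker τ := by
        rw [Submodule.span_le]
        rintro - ⟨x, rfl⟩
        exact congrFun hM x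
      exact hker hmem
    ext i j
    have := hτ (Matrix.single j i 1)
    simpa [τ, Matrix.trace, Matrix.diag, Matrix.mul_apply, Matrix.single, ite_and]
      using this
  -- evaluation identities
  have htR : ∀ (M : Matrix (Fin n) (Fin n) ℂ) (x : N), t (M * Θ (x : G)) = fun y => t M (x * y) := by
    intro M x; funext y
    show (M * Θ (x : G) * Θ (y : G)).trace = (M * Θ ((x : G) * (y : G))).trace
    rw [hmulA _ x.2 _ y.2, mul_assoc]
  have htL : ∀ (M : Matrix (Fin n) (Fin n) ℂ) (x : N), t (Θ (x : G) * M) = fun y => t M (y * x) := by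
    intro M x; funext y
    show (Θ (x : G) * M * Θ (y : G)).trace = (M * Θ ((y : G) * (x : G))).trace
    rw [mul_assoc, Matrix.trace_mul_comm, mul_assoc, ← hmulA _ y.2 _ x.2]
  have ht''R : ∀ (M : Matrix (Fin m) (Fin m) ℂ) (x : N), t'' (M * Θ'' (x : G)) = fun y => t'' M (x * y) := by
    intro M x; funext y
    show (M * Θ'' (x : G) * Θ'' (y : G)).trace = (M * Θ'' ((x : G) * (y : G))).trace
    rw [hmulB _ x.2 _ y.2, mul_assoc]
  have ht''L : ∀ (M : Matrix (Fin m) (Fin m) ℂ) (x : N), t'' (Θ'' (x : G) * M) = fun y => t'' M (y * x) := by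
    intro M x; funext y
    show (Θ'' (x : G) * M * Θ'' (y : G)).trace = (M * Θ'' ((y : G) * (x : G))).trace
    rw [mul_assoc, Matrix.trace_mul_comm, mul_assoc, ← hmulB _ y.2 _ x.2]
  -- equal generators
  have hgen : ∀ x : N, t (Θ (x : G)) = t'' (Θ'' (x : G)) := by
    intro x; funext y
    show (Θ (x : G) * Θ (y : G)).trace = (Θ'' (x : G) * Θ'' (y : G)).trace
    rw [← hmulA _ x.2 _ y.2, ← hmulB _ x.2 _ y.2]
    exact htr _ (mul_mem x.2 y.2)
  -- equal ranges
  have hrange : LinearMap.range t = LinearMap.range t'' := by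
    rw [LinearMap.range_eq_map, LinearMap.range_eq_map, ← hspanA, ← hspanB,
      Submodule.map_span, Submodule.map_span, ← Set.range_comp, ← Set.range_comp]
    congr 1
    exact congrArg Set.range (funext fun x => hgen x)
  -- pull back P' through the correspondence
  have hmem : t'' P' ∈ LinearMap.range t := by rw [hrange]; exact ⟨P', rfl⟩
  obtain ⟨Q, hQ⟩ := hmem
  -- Q intertwines Θ with the conjugation automorphism
  have hQc : ∀ x ∈ N, Q * Θ x = Θ (g * x * g⁻¹) * Q := by
    intro x hx
    apply htinj
    have e1 : t (Q * Θ x) = fun y => t Q (⟨x, hx⟩ * y) := htR Q ⟨x, hx⟩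
    have e2 : t (Θ (g * x * g⁻¹) * Q) = fun y => t Q (y * ⟨g * x * g⁻¹, hg x hx⟩) :=
      htL Q ⟨g * x * g⁻¹, hg x hx⟩
    have e3 : t'' (P' * Θ'' x) = fun y => t'' P' (⟨x, hx⟩ * y) := ht''R P' ⟨x, hx⟩
    have e4 : t'' (Θ'' (g * x * g⁻¹) * P') = fun y => t'' P' (y * ⟨g * x * g⁻¹, hg x hx⟩) :=
      ht''L P' ⟨g * x * g⁻¹, hg x hx⟩
    rw [e1, e2]
    funext y
    rw [hQ]
    have := congrFun (e3.symm.trans (by rw [hP'c x hx, e4])) y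
    exact this
  -- Schur: P⁻¹ * Q is scalar
  set Pinv : Matrix (Fin n) (Fin n) ℂ := ↑hP.unit⁻¹ with hPinv
  have hPP : Pinv * P = 1 := hP.val_inv_mul
  have hPP' : P * Pinv = 1 := hP.mul_val_inv
  have hcomm : ∀ x ∈ N, (Pinv * Q) * Θ x = Θ x * (Pinv * Q) := by
    intro x hx
    have hconj : Θ (g * x * g⁻¹) = P * Θ x * Pinv := by
      rw [hPc x hx, mul_assoc (Θ (g * x * g⁻¹)) P Pinv, hPP', mul_one]
    calc (Pinv * Q) * Θ x = Pinv * (Q * Θ x) := by rw [mul_assoc]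
      _ = Pinv * (Θ (g * x * g⁻¹) * Q) := by rw [hQc x hx]
      _ = Pinv * ((P * Θ x * Pinv) * Q) := by rw [hconj]
      _ = (Pinv * P) * Θ x * (Pinv * Q) := by noncomm_ring
      _ = Θ x * (Pinv * Q) := by rw [hPP, one_mul]
  obtain ⟨c, hc⟩ := aux_schur N hn Θ hirrA (Pinv * Q) hcomm
  have hQP : Q = c • P := by
    have : P * (Pinv * Q) = Q := by rw [← mul_assoc, hPP', one_mul]
    rw [← this, hc, Matrix.mul_smul, mul_one]
  -- c ≠ 0
  have hP'ne : P' ≠ 0 := by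
    intro h0
    subst h0
    have h1 : (1 : Matrix (Fin m) (Fin m) ℂ) = (↑hP'.unit⁻¹ : Matrix (Fin m) (Fin m) ℂ) * 0 :=
      hP'.val_inv_mul.symm
    rw [mul_zero] at h1
    have := congrFun (congrFun h1 ⟨0, hm⟩) ⟨0, hm⟩
    rw [Matrix.one_apply_eq] at this
    simp at this
  have hcne : c ≠ 0 := by
    intro h0
    apply hP'ne
    apply ht''inj
    rw [← hQ, hQP, h0, zero_smul, map_zero, map_zero]
  -- compare traces via evaluation at 1
  have htrQ : Q.trace = P'.trace := by
    have h1 := congrFun hQ (1 : N)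
    have e1 : t Q 1 = Q.trace := by
      show (Q * Θ ((1 : N) : G)).trace = Q.trace
      rw [OneMemClass.coe_one, h1A, mul_one]
    have e2 : t'' P' 1 = P'.trace := by
      show (P' * Θ'' ((1 : N) : G)).trace = P'.trace
      rw [OneMemClass.coe_one, h1B, mul_one]
    rw [← e1, ← e2, h1]
  have htrc : P'.trace = c * P.trace := by
    rw [← htrQ, hQP, Matrix.trace_smul, smul_eq_mul]
  constructor
  · intro h; rw [htrc, h, mul_zero]
  · intro h; rw [htrc] at h
    rcases mul_eq_zero.mp h with h | h
    · exact absurd h hcne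
    · exact h

/-- `Γ_{K,θ̃}` is independent of the choice of representative of the twist
class `θ̃` and of the choice of strong extension. -/
theorem statement7 (N K : Subgroup G) [N.Normal] (hfin : N.relIndex K ≠ 0) (hNK : N ≤ K)
    (θ : G → ℂ) (hθ : IsIrrChar N θ) (hKstab : ∀ k ∈ K, InK N θ k) (ψ : G →* ℂˣ)
    (θhat θhat' : G → ℂ)
    (hse : IsStrongExtChar N K θ θhat)
    (hse' : IsStrongExtChar N K (fun x => θ x * (ψ x : ℂ)) θhat') :
    ∀ ν : G → ℂˣ, LinKN N K ν →
      ((∃ ε : G →* ℂˣ, ∀ x ∈ K, θhat' x * (ε x : ℂ) = θhat' x * (ν x : ℂ)) ↔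
        (∃ ε : G →* ℂˣ, ∀ x ∈ K, θhat x * (ε x : ℂ) = θhat x * (ν x : ℂ))) := by
  intro ν hν
  simp only [IsStrongExtChar, IsStrongExt, IsStrongExtRep, IsIrrRep] at hse hse'
  obtain ⟨α, nn, hnn, Th, Pp, ⟨hΘmul, hΘ1, hΘu, hΘirr⟩, hθtr, hθ0,
    ⟨hPiN, hPiU, hPimix, hPimul⟩, hhat⟩ := hse
  obtain ⟨α', mm, hmm, Th', Pp', ⟨hmul', h1', hu', hirr'⟩, htr', h0',
    ⟨hPiN', hPiU', hPimix', hPimul'⟩, hhat'⟩ := hse'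
  -- the untwisted version of the second representation
  set Th'' : G → Matrix (Fin mm) (Fin mm) ℂ := fun x => (ψ x : ℂ)⁻¹ • Th' x with hTh''
  have hψne : ∀ x : G, (ψ x : ℂ) ≠ 0 := fun x => Units.ne_zero _
  have hmulB : ∀ x ∈ N, ∀ y ∈ N, Th'' (x * y) = Th'' x * Th'' y := by
    intro x hx y hy
    show (ψ (x * y) : ℂ)⁻¹ • Th' (x * y) = ((ψ x : ℂ)⁻¹ • Th' x) * ((ψ y : ℂ)⁻¹ • Th' y)
    rw [hmul' x hx y hy, map_mul, Units.val_mul, mul_inv, smul_mul_smul_comm]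
  have h1B : Th'' 1 = 1 := by
    show (ψ 1 : ℂ)⁻¹ • Th' 1 = 1
    rw [map_one, Units.val_one, inv_one, one_smul, h1']
  have hirrB : ∀ U : Submodule ℂ (Fin mm → ℂ),
      (∀ x ∈ N, ∀ v ∈ U, (Th'' x).mulVec v ∈ U) → U = ⊥ ∨ U = ⊤ := by
    intro U hU
    apply hirr'
    intro x hx v hv
    have hrew : Th' x = (ψ x : ℂ) • ((ψ x : ℂ)⁻¹ • Th' x) := by
      rw [smul_smul, mul_inv_cancel₀ (hψne x), one_smul]
    rw [hrew, Matrix.smul_mulVec]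
    exact Submodule.smul_mem U _ (hU x hx v hv)
  have htrB : ∀ x ∈ N, (Th x).trace = (Th'' x).trace := by
    intro x hx
    have h2 := htr' x hx
    show (Th x).trace = ((ψ x : ℂ)⁻¹ • Th' x).trace
    rw [Matrix.trace_smul, ← h2, ← hθtr x hx, smul_eq_mul]
    field_simp
  have hNnorm : N.Normal := inferInstance
  -- the key pointwise comparison
  have hzero : ∀ x ∈ K, (θhat x = 0 ↔ θhat' x = 0) := by
    intro g hgK
    have hgN : ∀ x ∈ N, g * x * g⁻¹ ∈ N := fun x hx => hNnorm.conj_mem x hx g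
    have hPc : ∀ x ∈ N, Pp g * Th x = Th (g * x * g⁻¹) * Pp g := by
      intro x hx
      have e1 := (hPimix g hgK x hx).1
      have e2 := (hPimix g hgK _ (hgN x hx)).2
      have e3 : g * x * g⁻¹ * g = g * x := by group
      rw [e3] at e2
      rw [← e1, e2]
    have hP'c : ∀ x ∈ N, Pp' g * Th' x = Th' (g * x * g⁻¹) * Pp' g := by
      intro x hx
      have e1 := (hPimix' g hgK x hx).1
      have e2 := (hPimix' g hgK _ (hgN x hx)).2
      have e3 : g * x * g⁻¹ * g = g * x := by group
      rw [e3] at e2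
      rw [← e1, e2]
    have hP''c : ∀ x ∈ N, Pp' g * Th'' x = Th'' (g * x * g⁻¹) * Pp' g := by
      intro x hx
      have hψc : ψ (g * x * g⁻¹) = ψ x := by
        rw [map_mul, map_mul, map_inv, mul_comm (ψ g) (ψ x), mul_inv_cancel_right]
      show Pp' g * ((ψ x : ℂ)⁻¹ • Th' x) = ((ψ (g * x * g⁻¹) : ℂ)⁻¹ • Th' (g * x * g⁻¹)) * Pp' g
      rw [hψc, Matrix.mul_smul, Matrix.smul_mul, hP'c x hx]
    have hiff := aux_transfer N hnn hmm Th Th'' hΘmul hΘ1 hΘirr hmulB h1B hirrB htrB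
      g hgN (Pp g) (Pp' g) (hPiU g hgK) (hPiU' g hgK) hPc hP''c
    rw [hhat g hgK, hhat' g hgK]
    exact hiff
  constructor
  · rintro ⟨ε, hε⟩
    refine ⟨ε, fun x hx => ?_⟩
    by_cases h : θhat x = 0
    · rw [h, zero_mul, zero_mul]
    · have h' : θhat' x ≠ 0 := fun hh => h ((hzero x hx).mpr hh)
      rw [mul_left_cancel₀ h' (hε x hx)]
  · rintro ⟨ε, hε⟩
    refine ⟨ε, fun x hx => ?_⟩
    by_cases h : θhat' x = 0
    · rw [h, zero_mul, zero_mul]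
    · have h' : θhat x ≠ 0 := fun hh => h ((hzero x hx).mp hh)
      rw [mul_left_cancel₀ h' (hε x hx)]


end TwistPaper
end

section
/- Let q be a prime dividing |L/N| and let μ ∈ Z¹(L_q/N, F_K) be a 1-cocycle. Suppose there exists a function ω_q : K/N → W_{(q)} such that for all g ∈ L_q one has μ(gN)_{(q)} = (ᵍω_q)·ω_q⁻¹·ν_g for some ν_g ∈ Γ. Then the induced map μ̄ : L_q/N → F_K/Γ, gN ↦ μ(gN)·Γ, is a 1-coboundary: μ̄ ∈ B¹(L_q/N, F_K/Γ). -/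
namespace TwistPaper

variable {G : Type*} [Group G]

/-- if the `q`-part `μ(gN)_{(q)}` of a `1`-cocycle
`μ ∈ Z¹(L_q/N, F_K)` is, modulo `Γ`, a coboundary of a `W_{(q)}`-valued function `ω_q`,
then the induced map `μ̄ : L_q/N → F_K/Γ` is a `1`-coboundary. -/
theorem statement11 (N K L Lq : Subgroup G) [N.Normal] (hfin : N.relIndex L ≠ 0)
    (hNK : N ≤ K) (hKL : K ≤ L) (hKnorm : ∀ g ∈ L, ∀ k ∈ K, g * k * g⁻¹ ∈ K)
    (q : ℕ) (hq : q.Prime) (hqdvd : q ∣ N.relIndex L) (hSyl : IsSylowOver q N Lq L)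
    (Γ : Subgroup (G → ℂˣ)) (hΓlin : ∀ ν ∈ Γ, LinKN N K ν)
    (hΓinv : ∀ g ∈ L, ∀ ν ∈ Γ, (fun x => ν (g⁻¹ * x * g)) ∈ Γ)
    -- the fixed projection `π_q : ℂˣ → W_{(q)}` onto the `q`-primary part of the
    -- roots of unity
    (π : ℂˣ →* ℂˣ)
    (hπ1 : ∀ z : ℂˣ, (∃ k : ℕ, z ^ q ^ k = 1) → π z = z)
    (hπ2 : ∀ (z : ℂˣ) (n : ℕ), 0 < n → z ^ n = 1 → ¬ q ∣ n → π z = 1)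
    -- `μ ∈ Z¹(L_q/N, F_K)`
    (μ : G → G → ℂˣ)
    (hμconst : ∀ g ∈ Lq, NConst N K (μ g))
    (hμN : ∀ g ∈ Lq, ∀ n ∈ N, ∀ x ∈ K, μ (g * n) x = μ g x)
    (hμcocycle : ∀ g ∈ Lq, ∀ g' ∈ Lq, ∀ x ∈ K, μ (g * g') x = μ g x * μ g' (g⁻¹ * x * g))
    -- the function `ω_q : K/N → W_{(q)}` with `μ(gN)_{(q)} = (ᵍω_q)·ω_q⁻¹·ν_g`, `ν_g ∈ Γ`
    (ωq : G → ℂˣ) (hωqconst : NConst N K ωq)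
    (hωqW : ∀ x ∈ K, ∃ k : ℕ, ωq x ^ q ^ k = 1)
    (hhyp : ∀ g ∈ Lq, ∃ ν ∈ Γ, ∀ x ∈ K,
        π (μ g x) = ωq (g⁻¹ * x * g) * (ωq x)⁻¹ * ν x) :
    -- conclusion: `μ̄ ∈ B¹(L_q/N, F_K/Γ)`
    ∃ ω : G → ℂˣ, NConst N K ω ∧ ∀ g ∈ Lq, ∃ ν ∈ Γ, ∀ x ∈ K,
      μ g x = ω (g⁻¹ * x * g) * (ω x)⁻¹ * ν x := by
  classical
  obtain ⟨hNLq, hLqL, ⟨a, ha⟩, -⟩ := hSyl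
  have hd0 : 0 < q ^ a := pow_pos hq.pos a
  have hcardQ : Nat.card (Lq ⧸ N.subgroupOf Lq) = q ^ a := ha
  have hfinQ : Finite (Lq ⧸ N.subgroupOf Lq) :=
    Nat.finite_of_card_ne_zero (by rw [hcardQ]; exact hd0.ne')
  have hfty : Fintype (Lq ⧸ N.subgroupOf Lq) := Fintype.ofFinite _
  set P : G → ℂˣ := fun x => ∏ c : Lq ⧸ N.subgroupOf Lq, μ ((Quotient.out c : Lq) : G) x
    with hP
  have hPconst : ∀ x ∈ K, ∀ n ∈ N, P (x * n) = P x := by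
    intro x hx n hn
    refine Finset.prod_congr rfl fun c _ => ?_
    exact hμconst _ (Quotient.out c).2 x hx n hn
  have hkey : ∀ g ∈ Lq, ∀ x ∈ K, P x = μ g x ^ q ^ a * P (g⁻¹ * x * g) := by
    intro g hg x hx
    have hterm : ∀ c : Lq ⧸ N.subgroupOf Lq,
        μ ((Quotient.out ((⟨g, hg⟩ : Lq) • c) : Lq) : G) x
          = μ g x * μ ((Quotient.out c : Lq) : G) (g⁻¹ * x * g) := by
      intro c
      have h1 : (QuotientGroup.mk ((⟨g, hg⟩ : Lq) * Quotient.out c) : Lq ⧸ N.subgroupOf Lq)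
          = QuotientGroup.mk (Quotient.out ((⟨g, hg⟩ : Lq) • c)) := by
        rw [QuotientGroup.out_eq']
        exact MulAction.Quotient.mk_smul_out _ (⟨g, hg⟩ : Lq) c
      have h2 := QuotientGroup.eq.mp h1
      set n : Lq := ((⟨g, hg⟩ : Lq) * Quotient.out c)⁻¹ * Quotient.out ((⟨g, hg⟩ : Lq) • c)
        with hn
      have hnN : (n : G) ∈ N := (Subgroup.mem_subgroupOf).mp h2
      have hout : Quotient.out ((⟨g, hg⟩ : Lq) • c) = ((⟨g, hg⟩ : Lq) * Quotient.out c) * n := by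
        rw [hn]; group
      have hgout : g * ((Quotient.out c : Lq) : G) ∈ Lq := mul_mem hg (Quotient.out c).2
      calc μ ((Quotient.out ((⟨g, hg⟩ : Lq) • c) : Lq) : G) x
          = μ ((g * ((Quotient.out c : Lq) : G)) * (n : G)) x := by rw [hout]; rfl
        _ = μ (g * ((Quotient.out c : Lq) : G)) x := hμN _ hgout _ hnN x hx
        _ = μ g x * μ ((Quotient.out c : Lq) : G) (g⁻¹ * x * g) :=
            hμcocycle g hg _ (Quotient.out c).2 x hx
    calc P x = ∏ c : Lq ⧸ N.subgroupOf Lq,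
          μ ((Quotient.out ((⟨g, hg⟩ : Lq) • c) : Lq) : G) x :=
        (Equiv.prod_comp ((MulAction.toPerm (⟨g, hg⟩ : Lq)) : Equiv.Perm (Lq ⧸ N.subgroupOf Lq))
          fun c => μ ((Quotient.out c : Lq) : G) x).symm
      _ = ∏ c : Lq ⧸ N.subgroupOf Lq,
            (μ g x * μ ((Quotient.out c : Lq) : G) (g⁻¹ * x * g)) :=
          Finset.prod_congr rfl fun c _ => hterm c
      _ = μ g x ^ q ^ a * P (g⁻¹ * x * g) := by
          rw [Finset.prod_mul_distrib, Finset.prod_const, Finset.card_univ,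
            ← Nat.card_eq_fintype_card, hcardQ]
  -- choose q^a-th roots
  have hroot : ∀ z : ℂˣ, ∃ w : ℂˣ, w ^ q ^ a = z := by
    intro z
    obtain ⟨w, hw⟩ := IsAlgClosed.exists_pow_nat_eq (z : ℂ) hd0
    have hw0 : w ≠ 0 := by
      intro h
      rw [h, zero_pow hd0.ne'] at hw
      exact z.ne_zero hw.symm
    exact ⟨Units.mk0 w hw0, Units.ext (by simpa using hw)⟩
  choose r hr using hroot
  set ω0 : G → ℂˣ := fun z => r (P z)⁻¹ with hω0
  have hω0pow : ∀ z : G, ω0 z ^ q ^ a = (P z)⁻¹ := fun z => hr (P z)⁻¹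
  refine ⟨fun z => ω0 z * ωq z * (π (ω0 z))⁻¹, ?_, ?_⟩
  · intro x hx n hn
    show ω0 (x * n) * ωq (x * n) * (π (ω0 (x * n)))⁻¹ = ω0 x * ωq x * (π (ω0 x))⁻¹
    have h1 : ω0 (x * n) = ω0 x := by rw [hω0]; simp only [hPconst x hx n hn]
    rw [h1, hωqconst x hx n hn]
  · intro g hg
    obtain ⟨ν, hνΓ, hν⟩ := hhyp g hg
    refine ⟨ν, hνΓ, fun x hx => ?_⟩
    have hyK : g⁻¹ * x * g ∈ K := by
      have := hKnorm g⁻¹ (inv_mem (hLqL hg)) x hx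
      simpa using this
    have hkd : μ g x ^ q ^ a = P x * (P (g⁻¹ * x * g))⁻¹ := by
      rw [hkey g hg x hx]; group
    have hτd : (μ g x * (ω0 (g⁻¹ * x * g))⁻¹ * ω0 x) ^ q ^ a = 1 := by
      rw [mul_pow, mul_pow, inv_pow, hkd, hω0pow, hω0pow]
      group
    have hπτ : π (μ g x * (ω0 (g⁻¹ * x * g))⁻¹ * ω0 x)
        = μ g x * (ω0 (g⁻¹ * x * g))⁻¹ * ω0 x := hπ1 _ ⟨a, hτd⟩
    have hcomb : μ g x * (ω0 (g⁻¹ * x * g))⁻¹ * ω0 x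
        = ωq (g⁻¹ * x * g) * (ωq x)⁻¹ * ν x * (π (ω0 (g⁻¹ * x * g)))⁻¹ * π (ω0 x) := by
      rw [← hπτ, map_mul, map_mul, map_inv, hν x hx]
    show μ g x = ω0 (g⁻¹ * x * g) * ωq (g⁻¹ * x * g) * (π (ω0 (g⁻¹ * x * g)))⁻¹
        * (ω0 x * ωq x * (π (ω0 x))⁻¹)⁻¹ * ν x
    have hc := congrArg Units.val hcomb
    apply Units.ext
    simp only [Units.val_mul, Units.val_inv_eq_inv_val] at hc ⊢
    field_simp at hc ⊢
    linear_combination hc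

end TwistPaper
end
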